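/- (Unisolvence of bi-cubic Hermite interpolation on a rectangle.) Let a < b and c < d be real numbers and let the four corners of the rectangle [a,b] × [c,d] be p₁ = (a,c), p₂ = (b,c), p₃ = (b,d), p₄ = (a,d). Then for any prescribed data (v_i, s_i, t_i, w_i) ∈ ℝ⁴ for i = 1, 2, 3, 4, there exists a unique bi-cubic polynomial F(x,y) = Σ_{k=0}^{3} Σ_{ℓ=0}^{3} c_{k,ℓ} x^k y^ℓ (with real coefficients c_{k,ℓ}) such that for each corner p_i: F(p_i) = v_i, ∂_x F(p_i) = s_i, ∂_y F(p_i) = t_i, and ∂²_{xy} F(p_i) = w_i. -/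

import Mathlib

open Finset
open Matrix

/-- The bi-cubic polynomial `F(x,y) = Σ_{k=0}^{3} Σ_{ℓ=0}^{3} q_{k,ℓ} x^k y^ℓ`
with coefficient matrix `q`. -/
def bicubic (q : Fin 4 → Fin 4 → ℝ) (x y : ℝ) : ℝ :=
  ∑ k : Fin 4, ∑ l : Fin 4, q k l * x ^ (k : ℕ) * y ^ (l : ℕ)

/-- value sum (same as `bicubic`). -/
def S00 (q : Fin 4 → Fin 4 → ℝ) (x y : ℝ) : ℝ := bicubic q x y

def S10 (q : Fin 4 → Fin 4 → ℝ) (x y : ℝ) : ℝ :=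
  ∑ k : Fin 4, ∑ l : Fin 4, q k l * ((k : ℕ) * x ^ ((k : ℕ) - 1)) * y ^ (l : ℕ)

def S01 (q : Fin 4 → Fin 4 → ℝ) (x y : ℝ) : ℝ :=
  ∑ k : Fin 4, ∑ l : Fin 4, q k l * x ^ (k : ℕ) * ((l : ℕ) * y ^ ((l : ℕ) - 1))

def S11 (q : Fin 4 → Fin 4 → ℝ) (x y : ℝ) : ℝ :=
  ∑ k : Fin 4, ∑ l : Fin 4, q k l * ((k : ℕ) * x ^ ((k : ℕ) - 1)) * ((l : ℕ) * y ^ ((l : ℕ) - 1))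

lemma hasDerivAt_bicubic_y (q : Fin 4 → Fin 4 → ℝ) (x y : ℝ) :
    HasDerivAt (fun y' => bicubic q x y') (S01 q x y) y := by
  unfold bicubic S01
  refine HasDerivAt.fun_sum fun k _ => HasDerivAt.fun_sum fun l _ => ?_
  exact (hasDerivAt_pow (l : ℕ) y).const_mul (q k l * x ^ (k : ℕ))

lemma hasDerivAt_bicubic_x (q : Fin 4 → Fin 4 → ℝ) (x y : ℝ) :
    HasDerivAt (fun x' => bicubic q x' y) (S10 q x y) x := by
  unfold bicubic S10
  refine HasDerivAt.fun_sum fun k _ => HasDerivAt.fun_sum fun l _ => ?_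
  exact ((hasDerivAt_pow (k : ℕ) x).const_mul (q k l)).mul_const (y ^ (l : ℕ))

lemma deriv_bicubic_y (q : Fin 4 → Fin 4 → ℝ) (x y : ℝ) :
    deriv (fun y' => bicubic q x y') y = S01 q x y :=
  (hasDerivAt_bicubic_y q x y).deriv

lemma deriv_bicubic_x (q : Fin 4 → Fin 4 → ℝ) (x y : ℝ) :
    deriv (fun x' => bicubic q x' y) x = S10 q x y :=
  (hasDerivAt_bicubic_x q x y).deriv

lemma deriv_bicubic_xy (q : Fin 4 → Fin 4 → ℝ) (x y : ℝ) :
    deriv (fun x' => deriv (fun y' => bicubic q x' y') y) x = S11 q x y := by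
  have hfun : (fun x' => deriv (fun y' => bicubic q x' y') y)
      = fun x' => ∑ k : Fin 4, ∑ l : Fin 4,
          q k l * x' ^ (k : ℕ) * ((l : ℕ) * y ^ ((l : ℕ) - 1)) :=
    funext fun x' => (hasDerivAt_bicubic_y q x' y).deriv
  rw [hfun]
  refine HasDerivAt.deriv ?_
  unfold S11
  refine HasDerivAt.fun_sum fun k _ => HasDerivAt.fun_sum fun l _ => ?_
  exact ((hasDerivAt_pow (k : ℕ) x).const_mul (q k l)).mul_const
    ((l : ℕ) * y ^ ((l : ℕ) - 1))

/-- The 1-D Hermite "functional" matrix at nodes `a`, `b`. -/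
def XA (a b : ℝ) : Matrix (Fin 4) (Fin 4) ℝ :=
  !![1, a, a ^ 2, a ^ 3;
     0, 1, 2 * a, 3 * a ^ 2;
     1, b, b ^ 2, b ^ 3;
     0, 1, 2 * b, 3 * b ^ 2]

lemma det_XA (a b : ℝ) : (XA a b).det = (b - a) ^ 4 := by
  simp [XA, Matrix.det_succ_row_zero, Fin.sum_univ_succ, Fin.succAbove, Fin.castSucc,
    Fin.castAdd, Fin.castLE]
  ring

set_option maxHeartbeats 1000000 in
lemma big (a b c d : ℝ) (q : Fin 4 → Fin 4 → ℝ) :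
    XA a b * Matrix.of q * (XA c d)ᵀ =
      Matrix.of ![![S00 q a c, S01 q a c, S00 q a d, S01 q a d],
                  ![S10 q a c, S11 q a c, S10 q a d, S11 q a d],
                  ![S00 q b c, S01 q b c, S00 q b d, S01 q b d],
                  ![S10 q b c, S11 q b c, S10 q b d, S11 q b d]] := by
  ext r s
  fin_cases r <;> fin_cases s <;>
    simp [XA, S00, S01, S10, S11, bicubic, Matrix.mul_apply, Fin.sum_univ_four,
      Matrix.vecHead, Matrix.vecTail, Function.comp,
      (show ((2 : Fin 4) : ℕ) = 2 from rfl), (show ((3 : Fin 4) : ℕ) = 3 from rfl),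
      (show (Fin.succ 2 : Fin 4) = 3 from rfl)] <;>
    ring

lemma cond_iff (q : Fin 4 → Fin 4 → ℝ) (x y V S T W : ℝ) :
    (bicubic q x y = V ∧ deriv (fun x' => bicubic q x' y) x = S ∧
      deriv (fun y' => bicubic q x y') y = T ∧
      deriv (fun x' => deriv (fun y' => bicubic q x' y') y) x = W) ↔
    (S00 q x y = V ∧ S10 q x y = S ∧ S01 q x y = T ∧ S11 q x y = W) := by
  rw [deriv_bicubic_x, deriv_bicubic_y, deriv_bicubic_xy]
  rfl

/-- Unisolvence of bi-cubic Hermite (Bogner–Fox–Schmit) interpolation on a rectangle: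
given a rectangle `[a,b] × [c,d]` (with `a < b`, `c < d`) and, at each of its four
corners `p₁ = (a,c)`, `p₂ = (b,c)`, `p₃ = (b,d)`, `p₄ = (a,d)`, prescribed values
`v i`, first partials `s i` and `t i`, and mixed second partials `w i`, there is a
unique bi-cubic polynomial matching all 16 conditions. -/
theorem bicubic_hermite_unisolvent
    (a b c d : ℝ) (hab : a < b) (hcd : c < d)
    (v s t w : Fin 4 → ℝ) :
    ∃! q : Fin 4 → Fin 4 → ℝ,
      ∀ i : Fin 4,
        bicubic q (![(a, c), (b, c), (b, d), (a, d)] i).1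
            (![(a, c), (b, c), (b, d), (a, d)] i).2 = v i ∧
        deriv (fun x => bicubic q x (![(a, c), (b, c), (b, d), (a, d)] i).2)
            (![(a, c), (b, c), (b, d), (a, d)] i).1 = s i ∧
        deriv (fun y => bicubic q (![(a, c), (b, c), (b, d), (a, d)] i).1 y)
            (![(a, c), (b, c), (b, d), (a, d)] i).2 = t i ∧
        deriv (fun x => deriv (fun y => bicubic q x y)
              (![(a, c), (b, c), (b, d), (a, d)] i).2)
            (![(a, c), (b, c), (b, d), (a, d)] i).1 = w i := by
  set DM : Matrix (Fin 4) (Fin 4) ℝ :=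
    !![v 0, t 0, v 3, t 3;
       s 0, w 0, s 3, w 3;
       v 1, t 1, v 2, t 2;
       s 1, w 1, s 2, w 2] with hDM
  have hA : IsUnit (XA a b).det := by
    rw [det_XA]; exact (pow_ne_zero 4 (sub_ne_zero.mpr hab.ne')).isUnit
  have hT : IsUnit ((XA c d)ᵀ).det := by
    rw [Matrix.det_transpose, det_XA]
    exact (pow_ne_zero 4 (sub_ne_zero.mpr hcd.ne')).isUnit
  -- unique solvability of the matrix equation
  have hmat : ∃! m : Matrix (Fin 4) (Fin 4) ℝ, XA a b * m * (XA c d)ᵀ = DM := by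
    refine ⟨(XA a b)⁻¹ * DM * ((XA c d)ᵀ)⁻¹, ?_, ?_⟩
    · show XA a b * ((XA a b)⁻¹ * DM * ((XA c d)ᵀ)⁻¹) * (XA c d)ᵀ = DM
      rw [mul_assoc ((XA a b)⁻¹) DM, Matrix.mul_nonsing_inv_cancel_left _ _ hA,
        Matrix.nonsing_inv_mul_cancel_right _ _ hT]
    · intro m hm
      rw [← hm, mul_assoc (XA a b) m, Matrix.nonsing_inv_mul_cancel_left _ _ hA,
        Matrix.mul_nonsing_inv_cancel_right _ _ hT]
  -- transfer along the equivalence of conditions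
  have keyP : ∀ q : Fin 4 → Fin 4 → ℝ,
      (∀ i : Fin 4,
        bicubic q (![(a, c), (b, c), (b, d), (a, d)] i).1
            (![(a, c), (b, c), (b, d), (a, d)] i).2 = v i ∧
        deriv (fun x => bicubic q x (![(a, c), (b, c), (b, d), (a, d)] i).2)
            (![(a, c), (b, c), (b, d), (a, d)] i).1 = s i ∧
        deriv (fun y => bicubic q (![(a, c), (b, c), (b, d), (a, d)] i).1 y)
            (![(a, c), (b, c), (b, d), (a, d)] i).2 = t i ∧
        deriv (fun x => deriv (fun y => bicubic q x y)
              (![(a, c), (b, c), (b, d), (a, d)] i).2)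
            (![(a, c), (b, c), (b, d), (a, d)] i).1 = w i)
      ↔ XA a b * Matrix.of q * (XA c d)ᵀ = DM := by
    intro q
    rw [big]
    constructor
    · intro h
      obtain ⟨h0a, h0b, h0c, h0d⟩ := (cond_iff q a c (v 0) (s 0) (t 0) (w 0)).mp (h 0)
      obtain ⟨h1a, h1b, h1c, h1d⟩ := (cond_iff q b c (v 1) (s 1) (t 1) (w 1)).mp (h 1)
      obtain ⟨h2a, h2b, h2c, h2d⟩ := (cond_iff q b d (v 2) (s 2) (t 2) (w 2)).mp (h 2)
      obtain ⟨h3a, h3b, h3c, h3d⟩ := (cond_iff q a d (v 3) (s 3) (t 3) (w 3)).mp (h 3)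
      ext r c'
      fin_cases r <;> fin_cases c' <;> simp [hDM]
      exacts [h0a, h0c, h3a, h3c, h0b, h0d, h3b, h3d,
              h1a, h1c, h2a, h2c, h1b, h1d, h2b, h2d]
    · intro h i
      rw [hDM] at h
      rw [← Matrix.ext_iff] at h
      fin_cases i
      · refine (cond_iff q a c (v 0) (s 0) (t 0) (w 0)).mpr ⟨?_, ?_, ?_, ?_⟩
        · simpa using h 0 0
        · simpa using h 1 0
        · simpa using h 0 1
        · simpa using h 1 1
      · refine (cond_iff q b c (v 1) (s 1) (t 1) (w 1)).mpr ⟨?_, ?_, ?_, ?_⟩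
        · simpa using h 2 0
        · simpa using h 3 0
        · simpa using h 2 1
        · simpa using h 3 1
      · refine (cond_iff q b d (v 2) (s 2) (t 2) (w 2)).mpr ⟨?_, ?_, ?_, ?_⟩
        · simpa using h 2 2
        · simpa using h 3 2
        · simpa using h 2 3
        · simpa using h 3 3
      · refine (cond_iff q a d (v 3) (s 3) (t 3) (w 3)).mpr ⟨?_, ?_, ?_, ?_⟩
        · simpa using h 0 2
        · simpa using h 1 2
        · simpa using h 0 3
        · simpa using h 1 3
  obtain ⟨m, hm, hmu⟩ := hmat
  refine ⟨m, (keyP m).mpr hm, fun q hq => ?_⟩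
  exact hmu (Matrix.of q) ((keyP q).mp hq)
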